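/- There exists an edge-coloring of the complete graph on the positive integers that contains a rainbow k-cycle for every odd integer k ≥ 3 but contains no rainbow cycle of any even length. -/

import Mathlib

/-- A rainbow cycle: `n` pairwise distinct vertices (given as an injective map
`v : Fin n → V`) such that the `n` edge colors `col (v i) (v (i+1))`
(indices cyclic mod `n`) are pairwise distinct. -/
def IsRainbowCycle {V C : Type*} {n : ℕ} (col : V → V → C) (v : Fin n → V) : Prop :=
  Function.Injective v ∧
    Function.Injective (fun i : Fin n =>
      col (v i) (v ⟨(i.val + 1) % n, Nat.mod_lt _ i.pos⟩))

/-- An edge-coloring `col` contains a rainbow `n`-cycle. -/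
def ContainsRainbowCycle {V C : Type*} (col : V → V → C) (n : ℕ) : Prop :=
  ∃ v : Fin n → V, IsRainbowCycle col v

/-- The coloring: edges between vertices of opposite parity get the color
`some (min x y)`; all edges between vertices of the same parity get the single
color `none`. -/
def parityMinCol (x y : ℕ+) : Option ℕ+ :=
  if Odd ((x : ℕ) + (y : ℕ)) then some (min x y) else none

lemma parityMinCol_symm (x y : ℕ+) : parityMinCol x y = parityMinCol y x := by
  unfold parityMinCol
  rw [Nat.add_comm, min_comm]

/-- There is a symmetric edge-coloring of the complete graph on the positive integers
containing rainbow `k`-cycles for all odd `k ≥ 3` but no even-length rainbow cycles. -/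
theorem exists_coloring_odd_only : ∃ (C : Type) (col : ℕ+ → ℕ+ → C),
    (∀ x y, col x y = col y x) ∧
    (∀ k : ℕ, 3 ≤ k → Odd k → ContainsRainbowCycle col k) ∧
    (∀ k : ℕ, 3 ≤ k → Even k → ¬ ContainsRainbowCycle col k) := by
  refine ⟨Option ℕ+, parityMinCol, parityMinCol_symm, ?_, ?_⟩
  · -- rainbow odd cycles exist: take vertices 1, 2, ..., k
    intro k hk hodd
    refine ⟨fun i => ⟨i.val + 1, Nat.succ_pos _⟩, ?_, ?_⟩
    · intro i j h
      have h' := congrArg (fun x : ℕ+ => (x : ℕ)) h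
      simp only [PNat.mk_ofNat, PNat.mk_coe] at h'
      exact Fin.ext (by omega)
    · have hcval : ∀ i : Fin k,
          parityMinCol (⟨i.val + 1, Nat.succ_pos _⟩ : ℕ+)
            (⟨((⟨(i.val + 1) % k, Nat.mod_lt _ i.pos⟩ : Fin k)).val + 1, Nat.succ_pos _⟩) =
          if i.val + 1 = k then none else some ⟨i.val + 1, Nat.succ_pos _⟩ := by
        intro i
        by_cases h : i.val + 1 = k
        · have h0 : (i.val + 1) % k = 0 := by rw [h]; exact Nat.mod_self k
          rw [if_pos h]
          unfold parityMinCol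
          simp only [h0, PNat.mk_coe]
          rw [if_neg]
          rcases hodd with ⟨m, hm⟩
          rw [Nat.not_odd_iff_even]
          exact ⟨m + 1, by omega⟩
        · have hlt : i.val + 1 < k := lt_of_le_of_ne i.isLt h
          have h0 : (i.val + 1) % k = i.val + 1 := Nat.mod_eq_of_lt hlt
          rw [if_neg h]
          unfold parityMinCol
          simp only [h0, PNat.mk_coe]
          rw [if_pos ⟨i.val + 1, by ring⟩]
          congr 1
          apply min_eq_left
          show i.val + 1 ≤ i.val + 1 + 1
          omega
      intro i j h
      simp only [hcval] at h
      by_cases h1 : i.val + 1 = k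
      · by_cases h2 : j.val + 1 = k
        · exact Fin.ext (by omega)
        · rw [if_pos h1, if_neg h2] at h
          exact absurd h (by simp)
      · by_cases h2 : j.val + 1 = k
        · rw [if_neg h1, if_pos h2] at h
          exact absurd h (by simp)
        · rw [if_neg h1, if_neg h2] at h
          have h' := congrArg (fun o : Option ℕ+ => (((o.getD 1) : ℕ+) : ℕ)) h
          change i.val + 1 = j.val + 1 at h'
          exact Fin.ext (by omega)
  · -- no rainbow even cycles
    rintro k hk heven ⟨v, hv, hc⟩
    have hkpos : 0 < k := by omega
    set next : Fin k → Fin k := fun i => ⟨(i.val + 1) % k, Nat.mod_lt _ i.pos⟩ with hnextdef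
    -- next is bijective
    have hmodval : ∀ a : ℕ, a < k → (a + 1) % k = if a + 1 = k then 0 else a + 1 := by
      intro a ha
      split_ifs with h
      · rw [h, Nat.mod_self]
      · exact Nat.mod_eq_of_lt (lt_of_le_of_ne ha h)
    have hnextinj : Function.Injective next := by
      intro i j h
      have h' : (i.val + 1) % k = (j.val + 1) % k := congrArg Fin.val h
      rw [hmodval i.val i.isLt, hmodval j.val j.isLt] at h'
      have hi := i.isLt
      have hj := j.isLt
      split_ifs at h' <;> exact Fin.ext (by omega)
    have hnextbij : Function.Bijective next :=
      (Finite.injective_iff_bijective).mp hnextinj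
    -- all edge sums are odd
    have hEsum : Even (∑ i : Fin k, (((v i : ℕ)) + ((v (next i) : ℕ)))) := by
      rw [Finset.sum_add_distrib, hnextbij.sum_comp (fun i => ((v i : ℕ)))]
      exact ⟨∑ i : Fin k, ((v i : ℕ)), by ring⟩
    have hOddCard : Even ((Finset.univ.filter
        (fun i : Fin k => Odd (((v i : ℕ)) + ((v (next i) : ℕ))))).card) :=
      (Finset.even_sum_iff_even_card_odd _).mp hEsum
    have hsplit := Finset.card_filter_add_card_filter_not
      (s := (Finset.univ : Finset (Fin k)))
      (p := fun i : Fin k => Odd (((v i : ℕ)) + ((v (next i) : ℕ))))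
    have hcardk : (Finset.univ : Finset (Fin k)).card = k := Finset.card_univ.trans (Fintype.card_fin k)
    have hNotOddEven : Even ((Finset.univ.filter
        (fun i : Fin k => ¬ Odd (((v i : ℕ)) + ((v (next i) : ℕ))))).card) := by
      rcases hOddCard with ⟨a, ha⟩
      rcases heven with ⟨b, hb⟩
      exact ⟨b - a, by omega⟩
    have hNotOddLe : (Finset.univ.filter
        (fun i : Fin k => ¬ Odd (((v i : ℕ)) + ((v (next i) : ℕ))))).card ≤ 1 := by
      rw [Finset.card_le_one]
      intro a ha b hb
      simp only [Finset.mem_filter] at ha hb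
      apply hc
      show parityMinCol (v a) (v (next a)) = parityMinCol (v b) (v (next b))
      unfold parityMinCol
      rw [if_neg ha.2, if_neg hb.2]
    have hallodd : ∀ i : Fin k, Odd (((v i : ℕ)) + ((v (next i) : ℕ))) := by
      have hzero : (Finset.univ.filter
          (fun i : Fin k => ¬ Odd (((v i : ℕ)) + ((v (next i) : ℕ))))).card = 0 := by
        rcases hNotOddEven with ⟨a, ha⟩
        omega
      intro i
      by_contra hcon
      have : i ∈ Finset.univ.filter
          (fun i : Fin k => ¬ Odd (((v i : ℕ)) + ((v (next i) : ℕ)))) :=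
        Finset.mem_filter.mpr ⟨Finset.mem_univ i, hcon⟩
      rw [Finset.card_eq_zero] at hzero
      rw [hzero] at this
      exact absurd this (Finset.notMem_empty i)
    -- the global minimum vertex gives two edges of the same color
    haveI : Nonempty (Fin k) := ⟨⟨0, hkpos⟩⟩
    obtain ⟨i0, hi0⟩ := Finite.exists_min v
    set j0 : Fin k := ⟨(i0.val + (k - 1)) % k, Nat.mod_lt _ hkpos⟩ with hj0def
    have hnextj0 : next j0 = i0 := by
      apply Fin.ext
      show ((i0.val + (k - 1)) % k + 1) % k = i0.val
      rw [Nat.mod_add_mod]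
      have h1 : i0.val + (k - 1) + 1 = i0.val + k := by omega
      rw [h1, Nat.add_mod_right, Nat.mod_eq_of_lt i0.isLt]
    have hcj0 : parityMinCol (v j0) (v (next j0)) = some (v i0) := by
      rw [hnextj0]
      unfold parityMinCol
      have hodd : Odd (((v j0 : ℕ)) + ((v i0 : ℕ))) := by
        have := hallodd j0
        rwa [hnextj0] at this
      rw [if_pos hodd, min_eq_right (hi0 j0)]
    have hci0 : parityMinCol (v i0) (v (next i0)) = some (v i0) := by
      unfold parityMinCol
      rw [if_pos (hallodd i0), min_eq_left (hi0 (next i0))]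
    have heqc : j0 = i0 := by
      apply hc
      show parityMinCol (v j0) (v (next j0)) = parityMinCol (v i0) (v (next i0))
      rw [hcj0, hci0]
    have hval : (i0.val + (k - 1)) % k = i0.val := congrArg Fin.val heqc
    have hi0lt := i0.isLt
    have hcases : (i0.val + (k - 1)) % k = if i0.val = 0 then k - 1 else i0.val - 1 := by
      split_ifs with h
      · rw [h, Nat.zero_add, Nat.mod_eq_of_lt (by omega)]
      · have h2 : i0.val + (k - 1) = (i0.val - 1) + 1 * k := by omega
        rw [h2, Nat.add_mul_mod_self_right, Nat.mod_eq_of_lt (by omega)]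
    rw [hcases] at hval
    split_ifs at hval <;> omega
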